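/- Let Φ ∈ ℝ^{d×S} be a matrix with ΦᵀΦ positive definite. Then Ω* = (ΦᵀΦ)^{1/2} / Tr((ΦᵀΦ)^{1/2}) is the unique minimizer of Tr(Φ Ω^{-1} Φᵀ) over symmetric positive definite matrices Ω with Tr(Ω) = 1. -/

import Mathlib

open Matrix

open scoped ComplexOrder in
/-- The positive semidefinite square root of a positive semidefinite matrix, as defined in
Mathlib (Dec 2024); removed from current Mathlib, restored here with its old definition. -/
noncomputable def Matrix.PosSemidef.sqrt {n : Type*} [Fintype n] [DecidableEq n] {𝕜 : Type*}
    [RCLike 𝕜] {A : Matrix n n 𝕜} (hA : A.PosSemidef) : Matrix n n 𝕜 :=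
  hA.1.eigenvectorUnitary.1 * diagonal ((↑) ∘ (√·) ∘ hA.1.eigenvalues) *
  (star hA.1.eigenvectorUnitary : Matrix n n 𝕜)

section Aux

lemma Matrix.PosSemidef.posSemidef_sqrt {k : ℕ} {A : Matrix (Fin k) (Fin k) ℝ}
    (hA : A.PosSemidef) : hA.sqrt.PosSemidef := by
  unfold Matrix.PosSemidef.sqrt
  rw [star_eq_conjTranspose]
  exact (PosSemidef.diagonal (fun i => by simp [Real.sqrt_nonneg])).mul_mul_conjTranspose_same _

lemma Matrix.PosSemidef.sqrt_mul_self {k : ℕ} {A : Matrix (Fin k) (Fin k) ℝ}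
    (hA : A.PosSemidef) : hA.sqrt * hA.sqrt = A := by
  unfold Matrix.PosSemidef.sqrt
  conv_rhs => rw [hA.1.spectral_theorem, Unitary.conjStarAlgAut_apply]
  set U : Matrix (Fin k) (Fin k) ℝ := hA.1.eigenvectorUnitary.1
  have hU : star U * U = 1 := Unitary.coe_star_mul_self _
  have hD : diagonal (RCLike.ofReal ∘ (fun x => √x) ∘ hA.1.eigenvalues : Fin k → ℝ) *
      diagonal (RCLike.ofReal ∘ (fun x => √x) ∘ hA.1.eigenvalues : Fin k → ℝ) =
      diagonal (RCLike.ofReal ∘ hA.1.eigenvalues : Fin k → ℝ) := by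
    rw [diagonal_mul_diagonal]
    congr 1
    funext i
    simp [Real.mul_self_sqrt (hA.eigenvalues_nonneg i)]
  simp only [Matrix.mul_assoc]
  rw [← Matrix.mul_assoc (star U) U, hU, Matrix.one_mul, ← Matrix.mul_assoc _ _ (star U), hD]

/-- The square root of a positive definite matrix is positive definite. -/
lemma aux_posDef_sqrt {k : ℕ} {A : Matrix (Fin k) (Fin k) ℝ} (hA : A.PosDef) :
    hA.posSemidef.sqrt.PosDef := by
  have hPSD : hA.posSemidef.sqrt.PosSemidef := hA.posSemidef.posSemidef_sqrt
  refine posDef_iff_dotProduct_mulVec.2 ⟨hPSD.1, fun x hx => ?_⟩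
  rcases (hPSD.dotProduct_mulVec_nonneg x).lt_or_eq with hlt | heq
  · exact hlt
  · exfalso
    have h0 : hA.posSemidef.sqrt *ᵥ x = 0 :=
      (hPSD.dotProduct_mulVec_zero_iff x).1 heq.symm
    have hAx : A *ᵥ x = 0 := by
      rw [← hA.posSemidef.sqrt_mul_self, ← mulVec_mulVec, h0, mulVec_zero]
    have := (posDef_iff_dotProduct_mulVec.1 hA).2 hx
    rw [hAx, dotProduct_zero] at this
    exact lt_irrefl 0 this

/-- A positive definite matrix on a nonempty index type has positive trace. -/
lemma aux_trace_pos {k : ℕ} [Nonempty (Fin k)] {A : Matrix (Fin k) (Fin k) ℝ}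
    (hA : A.PosDef) : 0 < A.trace := by
  have hdiag : ∀ i, 0 < A i i := by
    intro i
    have hne : (Pi.single i 1 : Fin k → ℝ) ≠ 0 := by
      intro hcon
      have := congrFun hcon i
      simp at this
    have := (posDef_iff_dotProduct_mulVec.1 hA).2 hne
    simpa [mulVec_single, single_dotProduct] using this
  exact Finset.sum_pos (fun i _ => hdiag i) Finset.univ_nonempty

end Aux

/-- For `Φ ∈ ℝ^{d×S}` with `ΦᵀΦ` positive definite,
`Ω* = (ΦᵀΦ)^{1/2} / Tr((ΦᵀΦ)^{1/2})` is the unique minimizer of `Tr(Φ Ω⁻¹ Φᵀ)` over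
symmetric positive definite matrices `Ω` with `Tr(Ω) = 1`. -/
theorem omega_update_unique_minimizer
    (d S : ℕ) (Φ : Matrix (Fin d) (Fin S) ℝ)
    (h : (Φᵀ * Φ).PosDef) :
    ∀ Ω : Matrix (Fin S) (Fin S) ℝ, Ω.PosDef → Ω.trace = 1 →
      (Φ * ((h.posSemidef.sqrt.trace)⁻¹ • h.posSemidef.sqrt)⁻¹ * Φᵀ).trace ≤
          (Φ * Ω⁻¹ * Φᵀ).trace ∧
        ((Φ * Ω⁻¹ * Φᵀ).trace =
            (Φ * ((h.posSemidef.sqrt.trace)⁻¹ • h.posSemidef.sqrt)⁻¹ * Φᵀ).trace →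
          Ω = (h.posSemidef.sqrt.trace)⁻¹ • h.posSemidef.sqrt) := by
  intro Ω hΩ hΩtr
  classical
  have hne : Nonempty (Fin S) := by
    by_contra hcon
    rw [not_nonempty_iff] at hcon
    rw [Matrix.trace_eq_zero_of_isEmpty] at hΩtr
    exact zero_ne_one hΩtr
  set R : Matrix (Fin S) (Fin S) ℝ := h.posSemidef.sqrt with hRdef
  set c : ℝ := R.trace with hcdef
  have hRps : R.PosSemidef := h.posSemidef.posSemidef_sqrt
  have hRpd : R.PosDef := aux_posDef_sqrt h
  have hRsym : Rᵀ = R := by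
    have := hRps.1
    simpa [Matrix.IsHermitian, conjTranspose_eq_transpose_of_trivial] using this
  have hRR : R * R = Φᵀ * Φ := h.posSemidef.sqrt_mul_self
  have hc : 0 < c := aux_trace_pos hRpd
  have hdetR : IsUnit R.det := (Matrix.isUnit_iff_isUnit_det R).1 hRpd.isUnit
  -- square root of Ω
  set X : Matrix (Fin S) (Fin S) ℝ := hΩ.posSemidef.sqrt with hXdef
  have hXps : X.PosSemidef := hΩ.posSemidef.posSemidef_sqrt
  have hXpd : X.PosDef := aux_posDef_sqrt hΩ
  have hXsym : Xᵀ = X := by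
    have := hXps.1
    simpa [Matrix.IsHermitian, conjTranspose_eq_transpose_of_trivial] using this
  have hXX : X * X = Ω := hΩ.posSemidef.sqrt_mul_self
  have hdetX : IsUnit X.det := (Matrix.isUnit_iff_isUnit_det X).1 hXpd.isUnit
  set Z : Matrix (Fin S) (Fin S) ℝ := X⁻¹ * R with hZdef
  have hXZ : X * Z = R := by
    rw [hZdef, ← Matrix.mul_assoc, Matrix.mul_nonsing_inv _ hdetX, Matrix.one_mul]
  have hXinv_sym : (X⁻¹)ᵀ = X⁻¹ := by
    rw [Matrix.transpose_nonsing_inv, hXsym]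
  have hΩinv : Ω⁻¹ = X⁻¹ * X⁻¹ := by
    rw [← hXX, Matrix.mul_inv_rev]
  -- objective as trace (A * Ω⁻¹)
  have hobj : (Φ * Ω⁻¹ * Φᵀ).trace = (Φᵀ * Φ * Ω⁻¹).trace := by
    rw [Matrix.trace_mul_cycle Φ Ω⁻¹ Φᵀ]
  -- value at the candidate minimizer
  have hRinv : ((c⁻¹ • R : Matrix (Fin S) (Fin S) ℝ))⁻¹ = c • R⁻¹ := by
    apply Matrix.inv_eq_right_inv
    rw [Matrix.smul_mul, Matrix.mul_smul, smul_smul, inv_mul_cancel₀ hc.ne',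
      Matrix.mul_nonsing_inv _ hdetR, one_smul]
  have hmin : (Φ * ((c⁻¹ • R : Matrix (Fin S) (Fin S) ℝ))⁻¹ * Φᵀ).trace = c * c := by
    rw [hRinv, Matrix.trace_mul_cycle Φ (c • R⁻¹) Φᵀ, Matrix.mul_smul, Matrix.trace_smul,
      ← hRR, Matrix.mul_assoc, Matrix.mul_nonsing_inv _ hdetR, Matrix.mul_one]
    simp [hcdef]
  -- the Cauchy–Schwarz vectors
  set u : EuclideanSpace ℝ (Fin S × Fin S) := WithLp.toLp 2 (fun p => X p.1 p.2) with hudef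
  set v : EuclideanSpace ℝ (Fin S × Fin S) := WithLp.toLp 2 (fun p => Z p.1 p.2) with hvdef
  have hinner : ∀ (a b : EuclideanSpace ℝ (Fin S × Fin S)),
      inner ℝ a b = ∑ i : Fin S, ∑ j : Fin S, a (i, j) * b (i, j) := by
    intro a b
    simp only [PiLp.inner_apply, RCLike.inner_apply, conj_trivial]
    rw [Fintype.sum_prod_type]
    exact Finset.sum_congr rfl fun _ _ => Finset.sum_congr rfl fun _ _ => mul_comm _ _
  have hXe : ∀ i j, X i j = X j i := fun i j => congrFun (congrFun hXsym j) i
  have huv : (inner ℝ u v : ℝ) = c := by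
    have hc2 : c = ∑ i : Fin S, ∑ j : Fin S, X j i * Z i j := by
      rw [hcdef, ← hXZ, Matrix.trace]
      simp only [Matrix.diag, Matrix.mul_apply]
      rw [Finset.sum_comm]
    rw [hinner, hc2]
    refine Finset.sum_congr rfl fun i _ => Finset.sum_congr rfl fun j _ => ?_
    show X i j * Z i j = X j i * Z i j
    rw [hXe i j]
  have huu : (inner ℝ u u : ℝ) = 1 := by
    have h1 : (1 : ℝ) = ∑ i : Fin S, ∑ j : Fin S, X j i * X i j := by
      rw [← hΩtr, ← hXX, Matrix.trace]
      simp only [Matrix.diag, Matrix.mul_apply]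
      rw [Finset.sum_comm]
    rw [hinner, h1]
    refine Finset.sum_congr rfl fun i _ => Finset.sum_congr rfl fun j _ => ?_
    show X i j * X i j = X j i * X i j
    rw [hXe i j]
  have hvv : (inner ℝ v v : ℝ) = (Φᵀ * Φ * Ω⁻¹).trace := by
    have htr : (Φᵀ * Φ * Ω⁻¹).trace = (Zᵀ * Z).trace := by
      rw [hZdef, Matrix.transpose_mul, hXinv_sym, hRsym, hΩinv]
      rw [show R * X⁻¹ * (X⁻¹ * R) = R * (X⁻¹ * (X⁻¹ * R)) by
        rw [Matrix.mul_assoc]]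
      rw [Matrix.trace_mul_comm R (X⁻¹ * (X⁻¹ * R))]
      rw [show X⁻¹ * (X⁻¹ * R) * R = X⁻¹ * X⁻¹ * (R * R) by
        simp [Matrix.mul_assoc]]
      rw [hRR, Matrix.trace_mul_comm]
    rw [htr, hinner, Matrix.trace]
    simp only [Matrix.diag, Matrix.mul_apply, Matrix.transpose_apply]
    rw [Finset.sum_comm]
  -- Cauchy–Schwarz inequality
  have hCS : c * c ≤ (Φᵀ * Φ * Ω⁻¹).trace := by
    have := real_inner_mul_inner_self_le u v
    rwa [huv, huu, hvv, one_mul] at this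
  constructor
  · rw [hobj, hmin]
    exact hCS
  · -- equality case
    intro heq
    rw [hobj, hmin] at heq
    -- norms
    have hu_norm : ‖u‖ = 1 := by
      have h1 : ‖u‖ * ‖u‖ = 1 := by rw [← real_inner_self_eq_norm_mul_norm, huu]
      nlinarith [norm_nonneg u]
    have hv_norm : ‖v‖ = c := by
      have h1 : ‖v‖ * ‖v‖ = c * c := by
        rw [← real_inner_self_eq_norm_mul_norm, hvv, heq]
      nlinarith [norm_nonneg v, hc]
    have heqCS : (inner ℝ u v : ℝ) = ‖u‖ * ‖v‖ := by
      rw [huv, hu_norm, hv_norm, one_mul]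
    have hprop : ‖v‖ • u = ‖u‖ • v := inner_eq_norm_mul_iff_real.1 heqCS
    rw [hu_norm, hv_norm, one_smul] at hprop
    -- Z = c • X
    have hZX : Z = c • X := by
      ext i j
      have := congrArg (fun w => w (i, j)) hprop.symm
      simpa [hudef, hvdef] using this
    have hRΩ : R = c • Ω := by
      rw [← hXZ, hZX, Matrix.mul_smul, hXX]
    have : c⁻¹ • R = Ω := by
      rw [hRΩ, smul_smul, inv_mul_cancel₀ hc.ne', one_smul]
    exact this.symm
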